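/- For any tree T on at least 3 vertices and any n ≥ 4, the minimum number of edges in a (T, T[n])-partite-extra-saturated graph equals (|T|−1)·n. -/

import Mathlib

open SimpleGraph

/-- The blow-up `H[n]` of a graph `H` onto parts of size `n`: each vertex of `H` is
replaced by an independent set of size `n`, each edge by a complete bipartite graph. -/
def blowup {V : Type*} (H : SimpleGraph V) (n : ℕ) : SimpleGraph (V × Fin n) :=
  SimpleGraph.comap Prod.fst H

/-- `f` selects one vertex in each part of the blow-up, forming a partite copy of `H` in `G`. -/
def IsPartiteCopy {V : Type*} {n : ℕ} (H : SimpleGraph V) (G : SimpleGraph (V × Fin n))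
    (f : V → Fin n) : Prop :=
  ∀ ⦃u v : V⦄, H.Adj u v → G.Adj (u, f u) (v, f v)

/-- `G ⊆ H[n]` is `(H,H[n])`-partite-saturated: it has no partite copy of `H`, but adding
any edge of `H[n]` not in `G` creates a partite copy of `H`. -/
def PartiteSaturated {V : Type*} {n : ℕ} (H : SimpleGraph V)
    (G : SimpleGraph (V × Fin n)) : Prop :=
  G ≤ blowup H n ∧ (¬ ∃ f, IsPartiteCopy H G f) ∧
    ∀ ⦃x y : V × Fin n⦄, (blowup H n).Adj x y → ¬ G.Adj x y →
      ∃ f, IsPartiteCopy H (G ⊔ SimpleGraph.fromEdgeSet {s(x, y)}) f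

/-- The degree of a vertex. -/
noncomputable def deg {α : Type*} (G : SimpleGraph α) (v : α) : ℕ := (G.neighborSet v).ncard

/-- `G ⊆ H[n]` is `(H,H[n])`-partite-extra-saturated: adding any edge of `H[n]` not in
`G` strictly increases the number of partite copies of `H`. -/
def ExtraSaturated {V : Type*} {n : ℕ} (H : SimpleGraph V)
    (G : SimpleGraph (V × Fin n)) : Prop :=
  G ≤ blowup H n ∧
    ∀ ⦃x y : V × Fin n⦄, (blowup H n).Adj x y → ¬ G.Adj x y →
      Nat.card {f : V → Fin n // IsPartiteCopy H G f} <
        Nat.card {f : V → Fin n //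
          IsPartiteCopy H (G ⊔ SimpleGraph.fromEdgeSet {s(x, y)}) f}

open Finset
set_option linter.unusedSectionVars false
set_option linter.unusedVariables false
attribute [local instance] Classical.propDecidable

noncomputable def E2 {V : Type*} {n : ℕ} (G : SimpleGraph (V × Fin n)) (u w : V) : ℕ :=
  (Finset.univ.filter fun p : Fin n × Fin n => G.Adj (u, p.1) (w, p.2)).card

section
variable {V : Type*} [Fintype V] {n : ℕ}

lemma E2_eq_sum (G : SimpleGraph (V × Fin n)) (u w : V) :
    E2 G u w = ∑ i : Fin n, ∑ j : Fin n, (if G.Adj (u, i) (w, j) then 1 else 0) := by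
  rw [E2, Finset.card_filter,
    Fintype.sum_prod_type (f := fun q : Fin n × Fin n => if G.Adj (u, q.1) (w, q.2) then 1 else 0)]

lemma degree_eq_sum (G : SimpleGraph (V × Fin n)) (a : V × Fin n) :
    G.degree a = ∑ w : V, ∑ j : Fin n, (if G.Adj a (w, j) then 1 else 0) := by
  have h1 : G.neighborFinset a = Finset.univ.filter (fun b => G.Adj a b) := by
    ext b; simp
  show (G.neighborFinset a).card = _
  rw [h1, Finset.card_filter,
    Fintype.sum_prod_type (f := fun b : V × Fin n => if G.Adj a b then 1 else 0)]

lemma sum_E2_eq (G : SimpleGraph (V × Fin n)) :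
    ∑ p : V × V, E2 G p.1 p.2 = 2 * G.edgeSet.ncard := by
  classical
  calc ∑ p : V × V, E2 G p.1 p.2
      = ∑ u : V, ∑ w : V, E2 G u w := by
        rw [Fintype.sum_prod_type (f := fun p : V × V => E2 G p.1 p.2)]
    _ = ∑ u : V, ∑ i : Fin n, ∑ w : V, ∑ j : Fin n, (if G.Adj (u, i) (w, j) then 1 else 0) := by
        refine Finset.sum_congr rfl fun u _ => ?_
        rw [show (∑ w : V, E2 G u w) = ∑ w : V, ∑ i : Fin n, ∑ j : Fin n,
            (if G.Adj (u, i) (w, j) then 1 else 0) from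
          Finset.sum_congr rfl fun w _ => E2_eq_sum G u w]
        exact Finset.sum_comm
    _ = ∑ a : V × Fin n, G.degree a := by
        rw [Fintype.sum_prod_type (f := fun a : V × Fin n => G.degree a)]
        exact Finset.sum_congr rfl fun u _ => Finset.sum_congr rfl fun i _ =>
          (degree_eq_sum G (u, i)).symm
    _ = 2 * G.edgeFinset.card := G.sum_degrees_eq_twice_card_edges
    _ = 2 * G.edgeSet.ncard := by rw [Set.ncard_eq_toFinset_card']; congr 2

lemma card_adjPairs_eq (T : SimpleGraph V) (hT : T.IsTree) :
    (Finset.univ.filter (fun p : V × V => T.Adj p.1 p.2)).card = 2 * (Fintype.card V - 1) := by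
  classical
  have h1 : (Finset.univ.filter (fun p : V × V => T.Adj p.1 p.2)).card
      = ∑ u : V, T.degree u := by
    rw [Finset.card_filter,
      Fintype.sum_prod_type (f := fun p : V × V => if T.Adj p.1 p.2 then 1 else 0)]
    refine Finset.sum_congr rfl fun u _ => ?_
    have h1 : T.neighborFinset u = Finset.univ.filter (fun b => T.Adj u b) := by
      ext b; simp
    show _ = (T.neighborFinset u).card
    rw [h1, Finset.card_filter]
  have h2 := T.sum_degrees_eq_twice_card_edges
  have h3 := hT.card_edgeFinset
  omega

end

lemma E2_symm {V : Type*} {n : ℕ} (G : SimpleGraph (V × Fin n)) (u w : V) :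
    E2 G u w = E2 G w u := by
  unfold E2
  apply Finset.card_nbij (fun p => (p.2, p.1))
  · intro p hp
    simp only [Finset.mem_coe, Finset.mem_filter, Finset.mem_univ, true_and] at *
    exact hp.symm
  · intro p hp q hq h
    simpa [Prod.ext_iff, and_comm] using h
  · intro p hp
    refine ⟨(p.2, p.1), ?_, rfl⟩
    simp only [Finset.mem_coe, Finset.mem_filter, Finset.mem_univ, true_and] at *
    exact hp.symm

lemma row_complete_le {V : Type*} {n : ℕ} (G : SimpleGraph (V × Fin n)) {u w : V} (i : Fin n)
    (h : ∀ j, G.Adj (u, i) (w, j)) : n ≤ E2 G u w := by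
  have := Finset.card_le_card_of_injOn (fun j : Fin n => ((i, j) : Fin n × Fin n))
    (s := Finset.univ) (t := Finset.univ.filter fun p : Fin n × Fin n => G.Adj (u, p.1) (w, p.2))
    (by intro j _; simp [h j]) (by intro a _ b _ hab; simpa [Prod.ext_iff] using hab)
  simpa [E2] using this

lemma col_complete_le {V : Type*} {n : ℕ} (G : SimpleGraph (V × Fin n)) {u w : V} (j : Fin n)
    (h : ∀ i, G.Adj (u, i) (w, j)) : n ≤ E2 G u w := by
  have := Finset.card_le_card_of_injOn (fun i : Fin n => ((i, j) : Fin n × Fin n))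
    (s := Finset.univ) (t := Finset.univ.filter fun p : Fin n × Fin n => G.Adj (u, p.1) (w, p.2))
    (by intro i _; simp [h i]) (by intro a _ b _ hab; simpa [Prod.ext_iff] using hab)
  simpa [E2] using this

lemma le_E2_of_cover {V : Type*} {n : ℕ} (G : SimpleGraph (V × Fin n)) {u x : V}
    (h : ∀ i, ∃ k, G.Adj (u, i) (x, k)) : n ≤ E2 G u x := by
  have := Finset.card_le_card_of_injOn (fun i : Fin n => ((i, (h i).choose) : Fin n × Fin n))
    (s := Finset.univ) (t := Finset.univ.filter fun p : Fin n × Fin n => G.Adj (u, p.1) (x, p.2))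
    (by intro i _; simp [(h i).choose_spec]) (by intro a _ b _ hab; exact (Prod.ext_iff.1 hab).1)
  simpa [E2] using this

/-- the key consequence of extra-saturation -/
def L1Prop {V : Type*} {n : ℕ} (T : SimpleGraph V) (G : SimpleGraph (V × Fin n)) : Prop :=
  ∀ u w : V, ∀ i j : Fin n, T.Adj u w → ¬ G.Adj (u, i) (w, j) →
    ∃ f : V → Fin n, f u = i ∧ f w = j ∧
      ∀ a b : V, T.Adj a b → s(a, b) ≠ s(u, w) → G.Adj (a, f a) (b, f b)

lemma cov_of_noncomplete {V : Type*} {n : ℕ} {T : SimpleGraph V} {G : SimpleGraph (V × Fin n)}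
    (hP : L1Prop T G) {u x : V} {i : Fin n} {k : Fin n} (hux : T.Adj u x)
    (hna : ¬ G.Adj (u, i) (x, k)) {y : V} (hy : T.Adj u y) (hyx : y ≠ x) :
    ∃ k', G.Adj (u, i) (y, k') := by
  obtain ⟨f, hfu, hfx, hrest⟩ := hP u x i k hux hna
  refine ⟨f y, ?_⟩
  have hne : s(u, y) ≠ s(u, x) := by
    intro h
    rw [Sym2.eq_iff] at h
    rcases h with ⟨-, h⟩ | ⟨h, -⟩
    · exact hyx h
    · exact hux.ne h
  have := hrest u y hy hne
  rwa [hfu] at this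

lemma cov_of_deficient {V : Type*} {n : ℕ} {T : SimpleGraph V} {G : SimpleGraph (V × Fin n)}
    (hP : L1Prop T G) {u w x : V} (huw : T.Adj u w) (hdef : E2 G u w < n)
    (hux : T.Adj u x) (hxw : x ≠ w) : ∀ i, ∃ k, G.Adj (u, i) (x, k) := by
  intro i
  have hj : ∃ j, ¬ G.Adj (u, i) (w, j) := by
    by_contra h
    push_neg at h
    exact absurd (row_complete_le G i h) (by omega)
  obtain ⟨j, hj⟩ := hj
  exact cov_of_noncomplete hP huw hj hux hxw

lemma partner_unique {V : Type*} {n : ℕ} {T : SimpleGraph V} {G : SimpleGraph (V × Fin n)}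
    (hP : L1Prop T G) {z a b : V} (h1 : T.Adj a z) (h1d : E2 G a z < n)
    (h2 : T.Adj b z) (h2d : E2 G b z < n) : a = b := by
  by_contra hne
  have hcov := cov_of_deficient hP h1.symm (by rwa [E2_symm]) h2.symm (Ne.symm hne)
  have := le_E2_of_cover G hcov
  rw [E2_symm] at this
  omega

lemma main_surplus {V : Type*} {n : ℕ} {T : SimpleGraph V} {G : SimpleGraph (V × Fin n)}
    (hP : L1Prop T G) {w₀ u x : V} (h1 : T.Adj w₀ u) (hd : E2 G w₀ u < n)
    (h3 : T.Adj u x) (h4 : x ≠ w₀) (hn3 : 3 ≤ n) :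
    n + 2 * (n - E2 G w₀ u) ≤ E2 G u x := by
  classical
  have hdu : E2 G u w₀ < n := by rwa [E2_symm]
  -- every (u,i) is covered toward x
  have hcov : ∀ i, ∃ k, G.Adj (u, i) (x, k) := cov_of_deficient hP h1.symm hdu h3 h4
  set C : Finset (Fin n) := Finset.univ.filter (fun i => ∀ k, G.Adj (u, i) (x, k)) with hC
  set c := C.card with hc
  have hcn : c ≤ n := by
    calc c ≤ (Finset.univ : Finset (Fin n)).card := Finset.card_le_card (Finset.filter_subset _ _)
    _ = n := by simp
  -- (i) : n - c ≤ E2 G u w₀, i.e. each non complete row is covered toward w₀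
  have hi : n - c ≤ E2 G u w₀ := by
    have hcov0 : ∀ i : Fin n, i ∈ Finset.univ \ C → ∃ j, G.Adj (u, i) (w₀, j) := by
      intro i hi
      rw [Finset.mem_sdiff, hC, Finset.mem_filter] at hi
      push_neg at hi
      obtain ⟨k, hk⟩ := hi.2 (hi.1)
      exact cov_of_noncomplete hP h3 hk h1.symm (Ne.symm h4)
    have := Finset.card_le_card_of_injOn
      (fun i : Fin n => ((i, if h : ∃ j, G.Adj (u, i) (w₀, j) then h.choose else i) : Fin n × Fin n))
      (s := Finset.univ \ C)
      (t := Finset.univ.filter fun p : Fin n × Fin n => G.Adj (u, p.1) (w₀, p.2))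
      (by intro i hi
          have h := hcov0 i hi
          simp only [Finset.mem_coe, Finset.mem_filter, Finset.mem_univ, true_and, dif_pos h]
          exact h.choose_spec)
      (by intro a _ b _ hab; exact (Prod.ext_iff.1 hab).1)
    have hsd : (Finset.univ \ C).card = n - c := by
      rw [Finset.card_sdiff_of_subset (Finset.subset_univ _)]; simp [hc]
    rw [hsd] at this
    exact this.trans_eq (by rw [E2])
  have hdelta : n - E2 G w₀ u ≤ c := by
    have := E2_symm G u w₀
    omega
  -- (ii) : E2 G u x ≥ c * n + (n - c)
  have hii : c * n + (n - c) ≤ E2 G u x := by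
    set S1 : Finset (Fin n × Fin n) := C ×ˢ Finset.univ with hS1
    set S2 : Finset (Fin n × Fin n) :=
      (Finset.univ \ C).image (fun i => (i, (hcov i).choose)) with hS2
    have hsub : S1 ∪ S2 ⊆ Finset.univ.filter fun p : Fin n × Fin n => G.Adj (u, p.1) (x, p.2) := by
      intro p hp
      simp only [Finset.mem_union, hS1, hS2, Finset.mem_product, Finset.mem_image] at hp
      simp only [Finset.mem_filter, Finset.mem_univ, true_and]
      rcases hp with ⟨hp1, -⟩ | ⟨i, -, rfl⟩
      · rw [hC, Finset.mem_filter] at hp1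
        exact hp1.2 p.2
      · exact (hcov i).choose_spec
    have hdisj : Disjoint S1 S2 := by
      rw [Finset.disjoint_left]
      intro p hp1 hp2
      simp only [hS1, Finset.mem_product] at hp1
      simp only [hS2, Finset.mem_image] at hp2
      obtain ⟨i, hi, rfl⟩ := hp2
      rw [Finset.mem_sdiff] at hi
      exact hi.2 hp1.1
    have hcard1 : S1.card = c * n := by simp [hS1, hc]
    have hcard2 : S2.card = n - c := by
      rw [hS2, Finset.card_image_of_injOn (by intro a _ b _ hab; exact (Prod.ext_iff.1 hab).1)]
      rw [Finset.card_sdiff_of_subset (Finset.subset_univ _)]; simp [hc]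
    calc c * n + (n - c) = (S1 ∪ S2).card := by
            rw [Finset.card_union_of_disjoint hdisj, hcard1, hcard2]
      _ ≤ _ := Finset.card_le_card hsub
      _ = E2 G u x := by rw [E2]
  have hmul : 3 * c ≤ c * n := by
    calc 3 * c = c * 3 := by ring
      _ ≤ c * n := Nat.mul_le_mul_left c hn3
  obtain ⟨m, hm⟩ : ∃ m, c * n = m := ⟨_, rfl⟩
  rw [hm] at hii hmul
  omega

lemma two_vertex_absurd {V : Type*} [Fintype V] {T : SimpleGraph V} (hT : T.IsTree)
    (hV : 3 ≤ Fintype.card V) {u w : V}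
    (hu : ∀ x, T.Adj u x → x = w) (hw : ∀ x, T.Adj w x → x = u) : False := by
  classical
  have key : ∀ (a z : V), T.Walk a z → (a = u ∨ a = w) → (z = u ∨ z = w) := by
    intro a z p
    induction p with
    | nil => exact fun h => h
    | cons hadj p ih =>
      intro hx
      apply ih
      rcases hx with rfl | rfl
      · right; exact hu _ hadj
      · left; exact hw _ hadj
  have hall : ∀ z : V, z = u ∨ z = w := by
    intro z
    obtain ⟨p⟩ := (hT.isConnected (u := u) (v := z))
    exact key u z p (Or.inl rfl)
  have : (Finset.univ : Finset V) ⊆ {u, w} := by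
    intro z _
    rcases hall z with rfl | rfl <;> simp
  have := Finset.card_le_card this
  rw [Finset.card_univ] at this
  have : Fintype.card V ≤ 2 := this.trans (Finset.card_insert_le _ _ |>.trans (by simp))
  omega
lemma lower_bound {V : Type*} [Fintype V] {n : ℕ} (T : SimpleGraph V)
    (G : SimpleGraph (V × Fin n)) (hT : T.IsTree) (hV : 3 ≤ Fintype.card V) (hn : 4 ≤ n)
    (hle : G ≤ blowup T n) (hP : L1Prop T G) :
    (Fintype.card V - 1) * n ≤ G.edgeSet.ncard := by
  classical
  set A : Finset (V × V) := Finset.univ.filter (fun p : V × V => T.Adj p.1 p.2) with hA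
  -- partner function
  have hpa' : ∀ w : V, ∃ a : V, (∃ u, T.Adj u w ∧ E2 G u w < n) →
      (T.Adj a w ∧ E2 G a w < n) := by
    intro w
    by_cases h : ∃ u, T.Adj u w ∧ E2 G u w < n
    · obtain ⟨u, hu⟩ := h; exact ⟨u, fun _ => hu⟩
    · exact ⟨w, fun hc => absurd hc h⟩
  choose pa hpa_spec using hpa'
  set bad : V → Prop := fun w => ∃ u, T.Adj u w ∧ E2 G u w < n with hbad
  have hpa_eq : ∀ w a, T.Adj a w → E2 G a w < n → pa w = a := by
    intro w a h1 h2
    have hb : bad w := ⟨a, h1, h2⟩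
    exact partner_unique hP (hpa_spec w hb).1 (hpa_spec w hb).2 h1 h2
  -- neighbor-other-than-partner function
  have hnb' : ∀ w : V, ∃ x : V, (∃ x', T.Adj w x' ∧ x' ≠ pa w) →
      (T.Adj w x ∧ x ≠ pa w) := by
    intro w
    by_cases h : ∃ x', T.Adj w x' ∧ x' ≠ pa w
    · obtain ⟨x, hx⟩ := h; exact ⟨x, fun _ => hx⟩
    · exact ⟨w, fun hc => absurd hc h⟩
  choose nb hnb_spec using hnb'
  set int : V → Prop := fun w => ∃ x', T.Adj w x' ∧ x' ≠ pa w with hint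
  set δ : V → ℕ := fun w => n - E2 G (pa w) w with hδ
  have hbad_pa : ∀ w, bad w → bad (pa w) :=
    fun w h => ⟨w, (hpa_spec w h).1.symm, by rw [E2_symm]; exact (hpa_spec w h).2⟩
  have hpa_pa : ∀ w, bad w → pa (pa w) = w :=
    fun w h => hpa_eq (pa w) w (hpa_spec w h).1.symm
      (by rw [E2_symm]; exact (hpa_spec w h).2)
  have hδ_pa : ∀ w, bad w → δ (pa w) = δ w := by
    intro w h
    rw [hδ]
    simp only
    rw [hpa_pa w h, E2_symm]
  have hne_pa : ∀ w, bad w → w ≠ pa w := by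
    intro w h
    exact ((hpa_spec w h).1.ne).symm
  -- leaf ⇒ partner internal
  have hleaf : ∀ w, bad w → ¬ int w → int (pa w) := by
    intro w hb hni
    by_contra hni2
    have hw : ∀ x, T.Adj w x → x = pa w := by
      intro x hx; by_contra hne; exact hni ⟨x, hx, hne⟩
    have hu : ∀ x, T.Adj (pa w) x → x = w := by
      intro x hx
      by_contra hne
      exact hni2 ⟨x, hx, fun hxx => hne (by rw [hxx, hpa_pa w hb])⟩
    exact two_vertex_absurd hT hV hu hw
  -- central vertex
  set z : V → V := fun w => if int w then w else pa w with hz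
  have hz_spec : ∀ w, bad w → bad (z w) ∧ int (z w) := by
    intro w h
    by_cases hi : int w
    · rw [hz]; simp only [if_pos hi]; exact ⟨h, hi⟩
    · rw [hz]; simp only [if_neg hi]; exact ⟨hbad_pa w h, hleaf w h hi⟩
  set t' : V → V × V := fun w => (z w, nb (z w)) with ht'
  set Bd : Finset V := Finset.univ.filter bad with hBd
  set recv : V × V → ℕ := fun p => ∑ w ∈ Bd, (if t' w = p then δ w else 0) with hrecv
  set emit : V × V → ℕ := fun p => if E2 G p.1 p.2 < n then n - E2 G p.1 p.2 else 0 with hemit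
  have ht'A : ∀ w, bad w → t' w ∈ A := by
    intro w h
    obtain ⟨hbz, hiz⟩ := hz_spec w h
    rw [hA, Finset.mem_filter]
    exact ⟨Finset.mem_univ _, (hnb_spec _ hiz).1⟩
  -- C2
  have hC2 : ∑ p ∈ A, recv p = ∑ w ∈ Bd, δ w := by
    rw [hrecv, Finset.sum_comm]
    refine Finset.sum_congr rfl fun w hw => ?_
    rw [Finset.sum_ite_eq A (t' w) (fun _ => δ w)]
    rw [if_pos (ht'A w ((Finset.mem_filter.1 hw).2))]
  -- C3
  have hC3 : ∑ p ∈ A, emit p = ∑ w ∈ Bd, δ w := by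
    rw [hemit]
    rw [← Finset.sum_filter]
    refine Finset.sum_bij (fun p _ => p.2) ?_ ?_ ?_ ?_
    · intro p hp
      rw [Finset.mem_filter, hA, Finset.mem_filter] at hp
      rw [hBd, Finset.mem_filter]
      exact ⟨Finset.mem_univ _, ⟨p.1, hp.1.2, hp.2⟩⟩
    · intro p hp q hq hpq
      rw [Finset.mem_filter, hA, Finset.mem_filter] at hp hq
      have hpq' : p.2 = q.2 := hpq
      have e1 : pa p.2 = p.1 := hpa_eq p.2 p.1 hp.1.2 hp.2
      have e2 : pa q.2 = q.1 := hpa_eq q.2 q.1 hq.1.2 hq.2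
      exact Prod.ext (by rw [← e1, ← e2, hpq']) hpq'
    · intro w hw
      rw [hBd, Finset.mem_filter] at hw
      refine ⟨(pa w, w), ?_, rfl⟩
      rw [Finset.mem_filter, hA, Finset.mem_filter]
      exact ⟨⟨Finset.mem_univ _, (hpa_spec w hw.2).1⟩, (hpa_spec w hw.2).2⟩
    · intro p hp
      rw [Finset.mem_filter, hA, Finset.mem_filter] at hp
      have e1 : pa p.2 = p.1 := hpa_eq p.2 p.1 hp.1.2 hp.2
      rw [hδ]
      simp only
      rw [e1]
  -- C1
  have hC1 : ∀ p ∈ A, n + recv p ≤ E2 G p.1 p.2 + emit p := by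
    intro p hpA
    by_cases hdef : E2 G p.1 p.2 < n
    · have hr : recv p = 0 := by
        rw [hrecv]
        apply Finset.sum_eq_zero
        intro w hw
        rw [if_neg]
        intro hteq
        have hbw : bad w := (Finset.mem_filter.1 hw).2
        obtain ⟨hbz, hiz⟩ := hz_spec w hbw
        have hcov := cov_of_deficient hP (hpa_spec _ hbz).1.symm
          (by rw [E2_symm]; exact (hpa_spec _ hbz).2) (hnb_spec _ hiz).1 (hnb_spec _ hiz).2
        have hge := le_E2_of_cover G hcov
        rw [ht'] at hteq
        rw [← hteq] at hdef
        simp only at hdef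
        omega
      rw [hemit]
      simp only [if_pos hdef]
      omega
    · rw [hemit]
      simp only [if_neg hdef]
      push_neg at hdef
      by_cases hr0 : recv p = 0
      · omega
      · obtain ⟨w₁, hw₁Bd, hw₁⟩ : ∃ w₁ ∈ Bd, t' w₁ = p := by
          by_contra hno
          push_neg at hno
          apply hr0
          rw [hrecv]
          apply Finset.sum_eq_zero
          intro w hw
          rw [if_neg (hno w hw)]
        have hbw₁ : bad w₁ := (Finset.mem_filter.1 hw₁Bd).2
        obtain ⟨hbz, hiz⟩ := hz_spec w₁ hbw₁
        have hp : p = (z w₁, nb (z w₁)) := by rw [← hw₁, ht']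
        set u := z w₁ with hu
        have hrle : recv p ≤ δ u + δ (pa u) := by
          have hvanish : ∀ w ∈ Bd, (if t' w = p then δ w else 0) ≠ 0 →
              w ∈ ({u, pa u} : Finset V) := by
            intro w hw hne0
            have hteq : t' w = p := by
              by_contra hc
              rw [if_neg hc] at hne0
              exact hne0 rfl
            have hbw : bad w := (Finset.mem_filter.1 hw).2
            have hzw : z w = u := by
              have : (t' w).1 = p.1 := by rw [hteq]
              rw [ht'] at this
              simp only at this
              rw [this, hp]
            by_cases hiw : int w
            · have : w = u := by rw [← hzw, hz]; simp [hiw]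
              rw [Finset.mem_insert]
              exact Or.inl this
            · have hpaw : pa w = u := by rw [← hzw, hz]; simp [hiw]
              have : pa u = w := by
                apply hpa_eq u w
                · rw [← hpaw]; exact (hpa_spec w hbw).1.symm
                · rw [← hpaw, E2_symm]; exact (hpa_spec w hbw).2
              rw [Finset.mem_insert, Finset.mem_singleton]
              exact Or.inr this.symm
          calc recv p = ∑ w ∈ Bd.filter (· ∈ ({u, pa u} : Finset V)),
                (if t' w = p then δ w else 0) := by
                rw [hrecv]; exact (Finset.sum_filter_of_ne hvanish).symm
            _ ≤ ∑ w ∈ ({u, pa u} : Finset V), (if t' w = p then δ w else 0) := by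
                apply Finset.sum_le_sum_of_subset
                intro w hw
                exact (Finset.mem_filter.1 hw).2
            _ ≤ ∑ w ∈ ({u, pa u} : Finset V), δ w := by
                apply Finset.sum_le_sum
                intro w _
                split <;> omega
            _ = δ u + δ (pa u) := Finset.sum_pair (hne_pa u hbz)
        have h2δ : δ (pa u) = δ u := hδ_pa u hbz
        have hsur : n + 2 * δ u ≤ E2 G u (nb u) := by
          have hms := main_surplus hP (hpa_spec u hbz).1 (hpa_spec u hbz).2
            (hnb_spec u hiz).1 (hnb_spec u hiz).2 (by omega)
          rw [hδ]
          exact hms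
        rw [hp]
        simp only
        rw [hp] at hrle
        omega
  -- combine
  have hsum : ∑ p ∈ A, (n + recv p) ≤ ∑ p ∈ A, (E2 G p.1 p.2 + emit p) :=
    Finset.sum_le_sum hC1
  rw [Finset.sum_add_distrib, Finset.sum_add_distrib, Finset.sum_const, hC2, hC3,
    smul_eq_mul] at hsum
  have hAsum : A.card * n ≤ ∑ p ∈ A, E2 G p.1 p.2 := by omega
  have hrestrict : ∑ p ∈ A, E2 G p.1 p.2 = ∑ p : V × V, E2 G p.1 p.2 := by
    rw [hA]
    apply Finset.sum_filter_of_ne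
    intro p _ hne
    rw [E2] at hne
    obtain ⟨q, hq⟩ := Finset.card_ne_zero.1 hne
    rw [Finset.mem_filter] at hq
    have := hle hq.2
    simpa [blowup] using this
  have htot := sum_E2_eq G
  have hAc := card_adjPairs_eq T hT
  rw [hrestrict, htot] at hAsum
  rw [hAc] at hAsum
  have h2 : 2 * ((Fintype.card V - 1) * n) ≤ 2 * G.edgeSet.ncard := by
    calc 2 * ((Fintype.card V - 1) * n) = 2 * (Fintype.card V - 1) * n := by ring
      _ ≤ 2 * G.edgeSet.ncard := hAsum
  omega

lemma extraSat_L1 {V : Type*} [Fintype V] {n : ℕ} (T : SimpleGraph V)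
    (G : SimpleGraph (V × Fin n)) (hG : ExtraSaturated T G) : L1Prop T G := by
  intro u w i j huw hnadj
  have hblow : (blowup T n).Adj (u, i) (w, j) := huw
  have hlt := hG.2 hblow hnadj
  have hmono : ∀ f : V → Fin n, IsPartiteCopy T G f →
      IsPartiteCopy T (G ⊔ SimpleGraph.fromEdgeSet {s(((u, i) : V × Fin n), (w, j))}) f :=
    fun f hf a b hab => Or.inl (hf hab)
  have hex : ∃ f : V → Fin n,
      IsPartiteCopy T (G ⊔ SimpleGraph.fromEdgeSet {s(((u, i) : V × Fin n), (w, j))}) f ∧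
      ¬ IsPartiteCopy T G f := by
    by_contra hno
    push_neg at hno
    have hinj : Function.Injective
        (fun g : {f : V → Fin n //
            IsPartiteCopy T (G ⊔ SimpleGraph.fromEdgeSet {s(((u, i) : V × Fin n), (w, j))}) f} =>
          (⟨g.1, hno g.1 g.2⟩ : {f : V → Fin n // IsPartiteCopy T G f})) := by
      intro a b h
      rw [Subtype.mk_eq_mk] at h
      exact Subtype.ext h
    have := Nat.card_le_card_of_injective _ hinj
    omega
  obtain ⟨f, hf1, hf0⟩ := hex
  have hf0' : ∃ a b, T.Adj a b ∧ ¬ G.Adj (a, f a) (b, f b) := by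
    by_contra hc
    push_neg at hc
    exact hf0 (fun a b hab => hc a b hab)
  obtain ⟨a, b, hab, hnadj'⟩ := hf0'
  have hsup := hf1 hab
  rw [SimpleGraph.sup_adj] at hsup
  rcases hsup with h | h
  · exact absurd h hnadj'
  · rw [SimpleGraph.fromEdgeSet_adj] at h
    have hmem : s((a, f a), (b, f b)) = s(((u, i) : V × Fin n), (w, j)) := by
      simpa using h.1
    rw [Sym2.eq_iff] at hmem
    have hfu_fw : f u = i ∧ f w = j := by
      rcases hmem with ⟨h1, h2⟩ | ⟨h1, h2⟩
      · simp only [Prod.mk.injEq] at h1 h2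
        obtain ⟨rfl, hfa⟩ := h1
        obtain ⟨rfl, hfb⟩ := h2
        exact ⟨hfa, hfb⟩
      · simp only [Prod.mk.injEq] at h1 h2
        obtain ⟨rfl, hfa⟩ := h1
        obtain ⟨rfl, hfb⟩ := h2
        exact ⟨hfb, hfa⟩
    refine ⟨f, hfu_fw.1, hfu_fw.2, ?_⟩
    intro c d hcd hne
    have hsup2 := hf1 hcd
    rw [SimpleGraph.sup_adj] at hsup2
    rcases hsup2 with h2 | h2
    · exact h2
    · exfalso
      rw [SimpleGraph.fromEdgeSet_adj] at h2
      have hmem2 : s((c, f c), (d, f d)) = s(((u, i) : V × Fin n), (w, j)) := by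
        simpa using h2.1
      apply hne
      have := congrArg (Sym2.map Prod.fst) hmem2
      simpa [Sym2.map_pair_eq] using this

/-- `n` disjoint partite copies of `T` -/
def copies {V : Type*} (T : SimpleGraph V) (n : ℕ) : SimpleGraph (V × Fin n) where
  Adj p q := T.Adj p.1 q.1 ∧ p.2 = q.2
  symm := ⟨fun p q h => ⟨h.1.symm, h.2.symm⟩⟩
  loopless := ⟨fun p h => T.loopless.irrefl p.1 h.1⟩

lemma copies_degree {V : Type*} [Fintype V] {n : ℕ} (T : SimpleGraph V) (p : V × Fin n) :
    (copies T n).degree p = T.degree p.1 := by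
  classical
  have h : (copies T n).neighborFinset p = (T.neighborFinset p.1).image (fun w => (w, p.2)) := by
    ext q
    simp only [SimpleGraph.mem_neighborFinset, Finset.mem_image]
    constructor
    · rintro ⟨h1, h2⟩
      exact ⟨q.1, h1, by rw [h2]⟩
    · rintro ⟨w, hw, rfl⟩
      exact ⟨hw, rfl⟩
  show ((copies T n).neighborFinset p).card = (T.neighborFinset p.1).card
  rw [h, Finset.card_image_of_injective _ (fun a b hab => (Prod.ext_iff.1 hab).1)]

lemma copies_ncard {V : Type*} [Fintype V] {n : ℕ} (T : SimpleGraph V) (hT : T.IsTree) :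
    (copies T n).edgeSet.ncard = (Fintype.card V - 1) * n := by
  classical
  have h1 := (copies T n).sum_degrees_eq_twice_card_edges
  have h2 : ∑ p : V × Fin n, (copies T n).degree p = n * ∑ u : V, T.degree u := by
    rw [Fintype.sum_prod_type (f := fun p : V × Fin n => (copies T n).degree p)]
    calc ∑ u : V, ∑ i : Fin n, (copies T n).degree (u, i)
        = ∑ u : V, ∑ _i : Fin n, T.degree u := by
          refine Finset.sum_congr rfl fun u _ => Finset.sum_congr rfl fun i _ => ?_
          exact copies_degree T (u, i)
      _ = ∑ u : V, n * T.degree u := by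
          refine Finset.sum_congr rfl fun u _ => ?_
          rw [Finset.sum_const, Finset.card_univ, Fintype.card_fin, smul_eq_mul]
      _ = n * ∑ u : V, T.degree u := by rw [Finset.mul_sum]
  have h3 := T.sum_degrees_eq_twice_card_edges
  have h4 := hT.card_edgeFinset
  have h5 : (copies T n).edgeSet.ncard = (copies T n).edgeFinset.card := by
    rw [Set.ncard_eq_toFinset_card']; congr 1
  have h6 : 2 * (copies T n).edgeFinset.card = 2 * ((Fintype.card V - 1) * n) := by
    rw [← h1, h2, h3]
    have : Fintype.card V - 1 = T.edgeFinset.card := by omega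
    rw [this]
    ring
  omega

lemma copies_extraSaturated {V : Type*} [Fintype V] {n : ℕ} (T : SimpleGraph V)
    (hT : T.IsTree) : ExtraSaturated T (copies T n) := by
  classical
  constructor
  · intro p q h
    exact h.1
  · rintro ⟨u, i⟩ ⟨w, j⟩ hblow hnadj
    have huw : T.Adj u w := hblow
    have hij : i ≠ j := fun h => hnadj ⟨huw, h⟩
    set T' := T \ SimpleGraph.fromEdgeSet {s(u, w)} with hT'
    set f₀ : V → Fin n := fun a => if T'.Reachable a u then i else j with hf₀
    have hreach_uw : ¬ T'.Reachable u w := by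
      have hbr := (isAcyclic_iff_forall_edge_isBridge.1 hT.2) (T.mem_edgeSet.2 huw)
      exact isBridge_iff.1 hbr
    have hf₀u : f₀ u = i := if_pos (Reachable.refl u)
    have hf₀w : f₀ w = j := if_neg (fun h => hreach_uw h.symm)
    have hcopy : IsPartiteCopy T
        (copies T n ⊔ SimpleGraph.fromEdgeSet {s(((u, i) : V × Fin n), (w, j))}) f₀ := by
      intro a b hab
      by_cases he : s(a, b) = s(u, w)
      · rw [Sym2.eq_iff] at he
        rcases he with ⟨rfl, rfl⟩ | ⟨rfl, rfl⟩
        · refine Or.inr ?_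
          rw [SimpleGraph.fromEdgeSet_adj]
          constructor
          · rw [hf₀u, hf₀w]; exact Set.mem_singleton _
          · intro hc
            exact huw.ne (Prod.ext_iff.1 hc).1
        · refine Or.inr ?_
          rw [SimpleGraph.fromEdgeSet_adj]
          constructor
          · rw [hf₀u, hf₀w, Sym2.eq_swap]; exact Set.mem_singleton _
          · intro hc
            exact huw.ne (Prod.ext_iff.1 hc).1.symm
      · have hadj' : T'.Adj a b := by
          rw [hT', SimpleGraph.sdiff_adj]
          refine ⟨hab, ?_⟩
          rw [SimpleGraph.fromEdgeSet_adj]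
          rintro ⟨hmem, -⟩
          exact he (by simpa using hmem)
        have heq : f₀ a = f₀ b := by
          rw [hf₀]
          simp only
          by_cases hr : T'.Reachable a u
          · rw [if_pos hr, if_pos (hadj'.symm.reachable.trans hr)]
          · rw [if_neg hr, if_neg (fun hb => hr (hadj'.reachable.trans hb))]
        exact Or.inl ⟨hab, heq⟩
    have hnotcopy : ¬ IsPartiteCopy T (copies T n) f₀ := by
      intro hc
      have := hc huw
      exact hij (by rw [← hf₀u, ← hf₀w]; exact this.2)
    haveI : Fintype {f : V → Fin n // IsPartiteCopy T (copies T n) f} := Fintype.ofFinite _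
    haveI : Fintype {f : V → Fin n // IsPartiteCopy T
        (copies T n ⊔ SimpleGraph.fromEdgeSet {s(((u, i) : V × Fin n), (w, j))}) f} :=
      Fintype.ofFinite _
    rw [Nat.card_eq_fintype_card, Nat.card_eq_fintype_card]
    apply Fintype.card_lt_of_injective_of_notMem
      (fun g : {f : V → Fin n // IsPartiteCopy T (copies T n) f} =>
        (⟨g.1, fun a b hab => Or.inl (g.2 hab)⟩ : {f : V → Fin n // IsPartiteCopy T
          (copies T n ⊔ SimpleGraph.fromEdgeSet {s(((u, i) : V × Fin n), (w, j))}) f}))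
      (by intro a b h
          have h := congrArg Subtype.val h
          exact Subtype.ext h)
      (b := ⟨f₀, hcopy⟩)
    rintro ⟨⟨g, hg⟩, hgeq⟩
    apply hnotcopy
    have : g = f₀ := by
      have := congrArg Subtype.val hgeq
      exact this
    rw [← this]
    exact hg


/-- For any tree `T` on at least `3` vertices and any `n ≥ 4`, the minimum number of
edges of a `(T,T[n])`-partite-extra-saturated graph is `(|T| - 1)·n`. -/
theorem stmt_17 {V : Type*} [Fintype V] (T : SimpleGraph V) (hT : T.IsTree)
    (hV : 3 ≤ Fintype.card V) (n : ℕ) (hn : 4 ≤ n) :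
    IsLeast {m : ℕ | ∃ G : SimpleGraph (V × Fin n),
        ExtraSaturated T G ∧ G.edgeSet.ncard = m}
      ((Fintype.card V - 1) * n) := by
  constructor
  · exact ⟨copies T n, copies_extraSaturated T hT, copies_ncard T hT⟩
  · rintro m ⟨G, hG, rfl⟩
    exact lower_bound T G hT hV hn hG.1 (extraSat_L1 T G hG)
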